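/- Let ε > 0, δ ∈ (0,1) and r > 0, and set h(u) = (1+u)·log(1+u) − u, q_i = 0 for 1 ≤ i ≤ K and q_i = (i−K)/i for K+1 ≤ i ≤ N. If the number T of sampled permutations satisfies ∑_{i=1}^{N} exp(−T·(1−q_i²)·h(ε/((1−q_i²)·r))) ≤ δ/2, then for T independent uniformly random permutations π_1,…,π_T of {1,…,N} and the Monte Carlo estimates ŝ_i = (1/T)·∑_{t=1}^{T} φ_i(π_t), one has P[ max_{1≤i≤N} |ŝ_i − s_i| ≥ ε ] ≤ δ. -/

import Mathlib

open Finset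
open scoped Classical

/-- The marginal contribution `φ_i(π) = ν(P_i^π ∪ {i}) − ν(P_i^π)` of point `i`,
where `P_i^π` is the set of points preceding `i` in the permutation `π`
(`π j` being the position of point `j`). -/
noncomputable def margContrib {N : ℕ} (ν : Finset (Fin N) → ℝ) (i : Fin N)
    (π : Equiv.Perm (Fin N)) : ℝ :=
  ν (insert i (Finset.univ.filter (fun j => π j < π i))) -
    ν (Finset.univ.filter (fun j => π j < π i))

/-- The Shapley value of point `i`: the average of its marginal contribution
over all `N!` permutations. -/
noncomputable def shapleyPerm {N : ℕ} (ν : Finset (Fin N) → ℝ) (i : Fin N) : ℝ :=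
  (1 / (Nat.factorial N : ℝ)) * ∑ π : Equiv.Perm (Fin N), margContrib ν i π

section MCBennettAux

open Finset
open scoped Classical

private lemma mcb_exp_tail (y : ℝ) :
    Real.exp y - 1 - y = ∑' n : ℕ, y ^ (n+2) / (Nat.factorial (n+2)) := by
  have hs := Real.summable_pow_div_factorial y
  have h := Summable.sum_add_tsum_nat_add (f := fun n => y ^ n / (Nat.factorial n)) 2 hs
  have hexp : Real.exp y = ∑' n : ℕ, y ^ n / (Nat.factorial n) := by
    rw [Real.exp_eq_exp_ℝ, NormedSpace.exp_eq_tsum_div]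
  rw [hexp, ← h]
  simp [Finset.sum_range_succ]
  ring

private lemma mcb_exp_pointwise (l x r : ℝ) (hl : 0 ≤ l) (hr : 0 < r) (hx : |x| ≤ r) :
    Real.exp (l * x) ≤ 1 + l * x + x ^ 2 / r ^ 2 * (Real.exp (l * r) - 1 - l * r) := by
  have hs1 : Summable (fun n : ℕ => (l*x) ^ (n+2) / (Nat.factorial (n+2))) :=
    (summable_nat_add_iff 2).2 (Real.summable_pow_div_factorial (l*x))
  have hs2 : Summable (fun n : ℕ => x^2/r^2 * ((l*r) ^ (n+2) / (Nat.factorial (n+2)))) :=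
    (((summable_nat_add_iff 2).2 (Real.summable_pow_div_factorial (l*r))).mul_left _)
  have key : Real.exp (l*x) - 1 - l*x ≤ x^2/r^2 * (Real.exp (l*r) - 1 - l*r) := by
    rw [mcb_exp_tail, mcb_exp_tail, ← tsum_mul_left]
    refine hs1.tsum_le_tsum (fun n => ?_) hs2
    have hfac : (0:ℝ) < (Nat.factorial (n+2) : ℝ) := by positivity
    rw [div_le_iff₀ hfac]
    have hxn : x^(n+2) ≤ x^2 * r^n := by
      calc x^(n+2) ≤ |x^(n+2)| := le_abs_self _
        _ = |x|^2 * |x|^n := by rw [abs_pow]; ring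
        _ ≤ x^2 * r^n := by
            rw [sq_abs]
            exact mul_le_mul_of_nonneg_left (pow_le_pow_left₀ (abs_nonneg x) hx n) (sq_nonneg x)
    calc (l*x)^(n+2) = l^(n+2) * x^(n+2) := by ring
      _ ≤ l^(n+2) * (x^2*r^n) := mul_le_mul_of_nonneg_left hxn (pow_nonneg hl _)
      _ = x^2/r^2 * ((l*r)^(n+2) / (Nat.factorial (n+2))) * (Nat.factorial (n+2)) := by
          field_simp
          ring
  linarith

private lemma mcb_chernoff_count {α : Type*} [Fintype α] (T : ℕ) (g : α → ℝ)
    (hg : ∀ a, 0 ≤ g a) (E : Finset (Fin T → α)) (c : ℝ)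
    (hE : ∀ ω ∈ E, c ≤ ∏ t, g (ω t)) :
    (E.card : ℝ) * c ≤ (∑ a, g a) ^ T := by
  have h1 : (E.card : ℝ) * c = ∑ _ω ∈ E, c := by
    rw [Finset.sum_const, nsmul_eq_mul]
  rw [h1]
  calc ∑ ω ∈ E, c ≤ ∑ ω ∈ E, ∏ t, g (ω t) := Finset.sum_le_sum hE
    _ ≤ ∑ ω : Fin T → α, ∏ t, g (ω t) :=
        Finset.sum_le_sum_of_subset_of_nonneg (Finset.subset_univ E)
          (fun ω _ _ => Finset.prod_nonneg fun t _ => hg _)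
    _ = (∑ a, g a) ^ T := by
        rw [← Fintype.piFinset_univ, ← Finset.prod_univ_sum]
        simp

private lemma mcb_bennett_onesided {α : Type*} [Fintype α] (T : ℕ) (X : α → ℝ) (r v ε : ℝ)
    (hr : 0 < r) (hv : 0 < v) (hε : 0 < ε) (hcard : 0 < Fintype.card α)
    (hX : ∀ a, |X a| ≤ r)
    (hm2 : ∑ a, (X a)^2 ≤ v * (Fintype.card α)) :
    ((univ.filter (fun ω : Fin T → α =>
        (T:ℝ) * ((∑ a, X a) / (Fintype.card α) + ε) ≤ ∑ t, X (ω t))).card : ℝ) ≤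
      (Fintype.card α : ℝ)^T * Real.exp (-(T:ℝ) * (v/r^2) *
        ((1 + ε*r/v) * Real.log (1 + ε*r/v) - ε*r/v)) := by
  have hr' : r ≠ 0 := ne_of_gt hr
  have hv' : v ≠ 0 := ne_of_gt hv
  set M : ℝ := (Fintype.card α : ℝ) with hM
  have hM0 : (0:ℝ) < M := by rw [hM]; exact_mod_cast hcard
  set μ : ℝ := (∑ a, X a) / M with hμ
  set u : ℝ := ε*r/v with hu_def
  have hu : 0 < u := by positivity
  set L : ℝ := Real.log (1+u) with hL
  have hL0 : 0 ≤ L := Real.log_nonneg (by linarith)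
  set l : ℝ := L / r with hl_def
  have hl : 0 ≤ l := div_nonneg hL0 hr.le
  have hlr : l * r = L := by rw [hl_def]; field_simp
  have hexplr : Real.exp (l*r) = 1 + u := by rw [hlr, hL, Real.exp_log (by linarith)]
  set C : ℝ := Real.exp (l*r) - 1 - l*r with hCdef
  have hC : C = u - L := by rw [hCdef, hexplr, hlr]; ring
  have hC0 : 0 ≤ C := by
    rw [hC]
    have := Real.log_le_sub_one_of_pos (x := 1+u) (by linarith)
    simp only [hL]
    linarith
  have hmgf : ∑ a, Real.exp (l * X a) ≤ M * Real.exp (l*μ + v/r^2 * C) := by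
    have h1 : ∑ a, Real.exp (l * X a) ≤ ∑ a, (1 + l * X a + (X a)^2/r^2 * C) :=
      Finset.sum_le_sum fun a _ => mcb_exp_pointwise l (X a) r hl hr (hX a)
    have h2 : ∑ a, (1 + l * X a + (X a)^2/r^2 * C)
        = M + l * (∑ a, X a) + (∑ a, (X a)^2)/r^2 * C := by
      rw [Finset.sum_add_distrib, Finset.sum_add_distrib, ← Finset.mul_sum]
      congr 1
      · congr 1
        simp [hM, card_univ]
      · rw [Finset.sum_div, Finset.sum_mul]
    have h3 : l * (∑ a, X a) = l * (M * μ) := by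
      rw [hμ]; field_simp
    have h4 : (∑ a, (X a)^2)/r^2 * C ≤ (v*M)/r^2 * C := by
      exact mul_le_mul_of_nonneg_right (by gcongr) hC0
    have h5 : M + l*(M*μ) + (v*M)/r^2 * C = M * (1 + (l*μ + v/r^2*C)) := by ring
    have h6 : M * (1 + (l*μ + v/r^2*C)) ≤ M * Real.exp (l*μ + v/r^2*C) := by
      apply mul_le_mul_of_nonneg_left _ hM0.le
      linarith [Real.add_one_le_exp (l*μ + v/r^2*C)]
    calc ∑ a, Real.exp (l * X a) ≤ M + l * (∑ a, X a) + (∑ a, (X a)^2)/r^2 * C := by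
          rw [← h2]; exact h1
      _ ≤ M + l*(M*μ) + (v*M)/r^2 * C := by rw [h3]; linarith
      _ ≤ M * Real.exp (l*μ + v/r^2*C) := le_trans (le_of_eq h5) h6
  have hch : ((univ.filter (fun ω : Fin T → α =>
        (T:ℝ) * (μ + ε) ≤ ∑ t, X (ω t))).card : ℝ) * Real.exp (l * ((T:ℝ)*(μ+ε)))
      ≤ (∑ a, Real.exp (l * X a)) ^ T := by
    apply mcb_chernoff_count T _ (fun a => Real.exp_nonneg _)
    intro ω hω
    rw [Finset.mem_filter] at hω
    calc Real.exp (l * ((T:ℝ)*(μ+ε))) ≤ Real.exp (l * ∑ t, X (ω t)) :=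
          Real.exp_le_exp.2 (mul_le_mul_of_nonneg_left hω.2 hl)
      _ = ∏ t, Real.exp (l * X (ω t)) := by
          rw [← Real.exp_sum, Finset.mul_sum]
  have hpow : (∑ a, Real.exp (l * X a)) ^ T ≤ (M * Real.exp (l*μ + v/r^2*C)) ^ T :=
    pow_le_pow_left₀ (Finset.sum_nonneg fun a _ => Real.exp_nonneg _) hmgf T
  have hfin : ((univ.filter (fun ω : Fin T → α =>
        (T:ℝ) * (μ + ε) ≤ ∑ t, X (ω t))).card : ℝ)
      ≤ M^T * Real.exp ((T:ℝ)*(l*μ + v/r^2*C) - l*((T:ℝ)*(μ+ε))) := by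
    have hEexp := le_trans hch hpow
    rw [mul_pow, ← Real.exp_nat_mul] at hEexp
    rw [Real.exp_sub, ← mul_div_assoc, le_div_iff₀ (Real.exp_pos _)]
    exact hEexp
  have hexpo : (T:ℝ)*(l*μ + v/r^2*C) - l*((T:ℝ)*(μ+ε))
      = -(T:ℝ) * (v/r^2) * ((1 + u) * L - u) := by
    rw [hC, hl_def, hu_def]
    field_simp
    ring
  rw [← hexpo]
  exact hfin

variable {N : ℕ}

private noncomputable def mcbRnk (i : Fin N) (π : Equiv.Perm (Fin N)) : ℕ :=
  (Finset.univ.filter (fun j => j < i ∧ π j < π i)).card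

private noncomputable def mcbRnk' (i : Fin N) (π : Equiv.Perm (Fin N)) (j : Fin N) : ℕ :=
  ((Finset.Iic i).filter (fun k => k ≠ j ∧ π k < π j)).card

private lemma mcb_rnk_swap (i j : Fin N) (hj : j ≤ i) (π : Equiv.Perm (Fin N)) :
    mcbRnk i (π * Equiv.swap i j) = mcbRnk' i π j := by
  unfold mcbRnk mcbRnk'
  apply Finset.card_nbij' (i := fun k => Equiv.swap i j k) (j := fun k => Equiv.swap i j k)
  · intro k hk
    simp only [mem_coe, mem_filter, mem_univ, true_and, Equiv.Perm.mul_apply, Equiv.swap_apply_self,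
      Equiv.swap_apply_left, mem_Iic] at hk ⊢
    obtain ⟨hki, hπ⟩ := hk
    by_cases hkj : k = j
    · subst hkj
      rw [Equiv.swap_apply_right] at hπ ⊢
      exact ⟨le_refl i, (ne_of_gt hki), hπ⟩
    · rw [Equiv.swap_apply_of_ne_of_ne (ne_of_lt hki) hkj] at hπ ⊢
      exact ⟨le_of_lt hki, hkj, hπ⟩
  · intro k hk
    simp only [mem_coe, mem_filter, mem_univ, true_and, Equiv.Perm.mul_apply, Equiv.swap_apply_self,
      Equiv.swap_apply_left, mem_Iic] at hk ⊢
    obtain ⟨hki, hkj, hπ⟩ := hk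
    by_cases hki' : k = i
    · subst hki'
      rw [Equiv.swap_apply_left]
      exact ⟨lt_of_le_of_ne hj (Ne.symm hkj), hπ⟩
    · rw [Equiv.swap_apply_of_ne_of_ne hki' hkj]
      exact ⟨lt_of_le_of_ne hki hki', hπ⟩
  · intro k _; exact Equiv.swap_apply_self _ _ _
  · intro k _; exact Equiv.swap_apply_self _ _ _

private lemma mcb_rnk'_injOn (i : Fin N) (π : Equiv.Perm (Fin N)) :
    Set.InjOn (mcbRnk' i π) (Finset.Iic i) := by
  have key : ∀ j1 ∈ Finset.Iic i, ∀ j2 ∈ Finset.Iic i, π j1 < π j2 →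
      mcbRnk' i π j1 < mcbRnk' i π j2 := by
    intro j1 h1 j2 h2 hlt
    apply Finset.card_lt_card
    constructor
    · intro k hk
      simp only [mem_filter, mem_Iic] at hk ⊢
      refine ⟨hk.1, ?_, lt_trans hk.2.2 hlt⟩
      rintro rfl
      exact absurd hlt (not_lt.2 (le_of_lt hk.2.2))
    · intro hsub
      have hj1 : j1 ∈ (Finset.Iic i).filter (fun k => k ≠ j2 ∧ π k < π j2) := by
        simp only [mem_filter, mem_Iic]
        exact ⟨by simpa using h1, fun h => absurd (congrArg π h) (ne_of_lt hlt), hlt⟩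
      have := hsub hj1
      simp only [mem_filter] at this
      exact this.2.1 rfl
  intro j1 h1 j2 h2 heq
  by_contra hne
  have : π j1 ≠ π j2 := fun h => hne (π.injective h)
  rcases this.lt_or_gt with h | h
  · exact absurd heq (ne_of_lt (key j1 h1 j2 h2 h))
  · exact absurd heq.symm (ne_of_lt (key j2 h2 j1 h1 h))

private lemma mcb_rank_count (K : ℕ) (i : Fin N) :
    ((i:ℕ)+1) * (univ.filter (fun π : Equiv.Perm (Fin N) => mcbRnk i π < K)).card
      ≤ K * (Fintype.card (Equiv.Perm (Fin N))) := by
  have slice : ∀ j ∈ Finset.Iic i,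
      (univ.filter (fun π : Equiv.Perm (Fin N) => mcbRnk i π < K)).card
        = (univ.filter (fun π : Equiv.Perm (Fin N) => mcbRnk' i π j < K)).card := by
    intro j hj
    rw [mem_Iic] at hj
    apply Finset.card_nbij' (i := fun π => π * Equiv.swap i j) (j := fun π => π * Equiv.swap i j)
    · intro π hπ
      simp only [mem_coe, mem_filter, mem_univ, true_and] at hπ ⊢
      rw [← mcb_rnk_swap i j hj]
      simpa [mul_assoc] using hπ
    · intro π hπ
      simp only [mem_coe, mem_filter, mem_univ, true_and] at hπ ⊢
      rw [mcb_rnk_swap i j hj]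
      exact hπ
    · intro π _; simp [mul_assoc]
    · intro π _; simp [mul_assoc]
  have perπ : ∀ π : Equiv.Perm (Fin N),
      ((Finset.Iic i).filter (fun j => mcbRnk' i π j < K)).card ≤ K := by
    intro π
    have h : ((Finset.Iic i).filter (fun j => mcbRnk' i π j < K)).card
        ≤ (Finset.range K).card := by
      apply Finset.card_le_card_of_injOn (mcbRnk' i π)
      · intro j hj
        simp only [mem_coe, mem_filter] at hj
        exact Finset.mem_range.2 hj.2
      · refine (mcb_rnk'_injOn i π).mono ?_
        intro x hx
        simp only [Finset.coe_filter, Set.mem_setOf_eq] at hx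
        exact Finset.mem_coe.2 hx.1
    rwa [Finset.card_range] at h
  calc ((i:ℕ)+1) * (univ.filter (fun π : Equiv.Perm (Fin N) => mcbRnk i π < K)).card
      = ∑ _j ∈ Finset.Iic i,
          (univ.filter (fun π : Equiv.Perm (Fin N) => mcbRnk i π < K)).card := by
        rw [Finset.sum_const, Fin.card_Iic, smul_eq_mul]
    _ = ∑ j ∈ Finset.Iic i,
          (univ.filter (fun π : Equiv.Perm (Fin N) => mcbRnk' i π j < K)).card :=
        Finset.sum_congr rfl slice
    _ = ∑ j ∈ Finset.Iic i, ∑ π : Equiv.Perm (Fin N), if mcbRnk' i π j < K then 1 else 0 := by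
        refine Finset.sum_congr rfl (fun j _ => ?_)
        rw [Finset.card_filter]
    _ = ∑ π : Equiv.Perm (Fin N), ∑ j ∈ Finset.Iic i, if mcbRnk' i π j < K then 1 else 0 :=
        Finset.sum_comm
    _ ≤ ∑ _π : Equiv.Perm (Fin N), K := by
        refine Finset.sum_le_sum (fun π _ => ?_)
        rw [← Finset.card_filter]
        exact perπ π
    _ = K * Fintype.card (Equiv.Perm (Fin N)) := by
        rw [Finset.sum_const, card_univ, smul_eq_mul, mul_comm]

end MCBennettAux

section MCBennettAux2

open Finset
open scoped Classical

private lemma mcb_marg_zero {N K : ℕ} (ν : Finset (Fin N) → ℝ)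
    (hloc : ∀ (S : Finset (Fin N)) (i : Fin N), i ∉ S →
      K ≤ (S.filter (fun j => j < i)).card → ν (insert i S) = ν S)
    (i : Fin N) (π : Equiv.Perm (Fin N)) (h : K ≤ mcbRnk i π) :
    margContrib ν i π = 0 := by
  unfold margContrib
  rw [hloc _ i (by simp) ?_, sub_self]
  rw [Finset.filter_filter]
  unfold mcbRnk at h
  have hset : (Finset.univ.filter (fun j : Fin N => π j < π i ∧ j < i))
      = Finset.univ.filter (fun j : Fin N => j < i ∧ π j < π i) := by
    apply Finset.filter_congr
    intro j _
    exact and_comm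
  rw [hset]
  exact h

private lemma mcb_q_bounds {N K : ℕ} (hK1 : 1 ≤ K) (q : Fin N → ℝ)
    (hq : ∀ i : Fin N,
      q i = if (i : ℕ) + 1 ≤ K then 0
        else (((i : ℕ) + 1 - K : ℕ) : ℝ) / ((i : ℕ) + 1)) (i : Fin N) :
    0 ≤ q i ∧ q i < 1 := by
  rw [hq i]
  split_ifs with h
  · exact ⟨le_refl 0, zero_lt_one⟩
  · constructor
    · positivity
    · rw [div_lt_one (by positivity)]
      have h1 : (i:ℕ) + 1 - K ≤ (i:ℕ) := by omega
      have : (((i:ℕ) + 1 - K : ℕ) : ℝ) ≤ ((i:ℕ) : ℝ) := by exact_mod_cast h1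
      linarith

private lemma mcb_second_moment {N K : ℕ} (hK1 : 1 ≤ K)
    (ν : Finset (Fin N) → ℝ)
    (hloc : ∀ (S : Finset (Fin N)) (i : Fin N), i ∉ S →
      K ≤ (S.filter (fun j => j < i)).card → ν (insert i S) = ν S)
    (r : ℝ) (hr : 0 < r)
    (hrange : ∀ (i : Fin N) (π : Equiv.Perm (Fin N)), |margContrib ν i π| ≤ r)
    (q : Fin N → ℝ)
    (hq : ∀ i : Fin N,
      q i = if (i : ℕ) + 1 ≤ K then 0
        else (((i : ℕ) + 1 - K : ℕ) : ℝ) / ((i : ℕ) + 1)) (i : Fin N) :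
    ∑ π : Equiv.Perm (Fin N), (margContrib ν i π)^2
      ≤ ((1 - q i ^ 2) * r^2) * (Fintype.card (Equiv.Perm (Fin N))) := by
  set M : ℕ := Fintype.card (Equiv.Perm (Fin N)) with hMdef
  have hsq : ∀ π : Equiv.Perm (Fin N), (margContrib ν i π)^2 ≤ r^2 := by
    intro π
    rw [← sq_abs]
    exact pow_le_pow_left₀ (abs_nonneg _) (hrange i π) 2
  by_cases hcase : (i:ℕ) + 1 ≤ K
  · have hqi : q i = 0 := by rw [hq i, if_pos hcase]
    rw [hqi]
    calc ∑ π : Equiv.Perm (Fin N), (margContrib ν i π)^2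
        ≤ ∑ _π : Equiv.Perm (Fin N), r^2 := Finset.sum_le_sum (fun π _ => hsq π)
      _ = r^2 * M := by rw [Finset.sum_const, card_univ, nsmul_eq_mul, mul_comm]
      _ = ((1 - (0:ℝ)^2) * r^2) * M := by ring
  · push_neg at hcase
    have hKi : K ≤ (i:ℕ) + 1 := le_of_lt hcase
    have hqi : q i = (((i:ℕ) + 1 - K : ℕ) : ℝ) / ((i:ℕ) + 1) := by
      rw [hq i, if_neg (not_le.2 hcase)]
    set m : ℝ := ((i:ℕ) : ℝ) + 1 with hm
    have hm0 : (0:ℝ) < m := by positivity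
    have hqi' : q i = (m - K) / m := by
      rw [hqi, Nat.cast_sub hKi]
      push_cast
      rw [hm]
    have hq0 : 0 ≤ q i := (mcb_q_bounds hK1 q hq i).1
    have hq1 : q i < 1 := (mcb_q_bounds hK1 q hq i).2
    have h1q : 1 - q i = (K:ℝ) / m := by
      rw [hqi']
      field_simp
      ring
    -- split the sum
    have hsplit : ∑ π : Equiv.Perm (Fin N), (margContrib ν i π)^2
        = ∑ π ∈ univ.filter (fun π : Equiv.Perm (Fin N) => mcbRnk i π < K),
            (margContrib ν i π)^2 := by
      rw [← Finset.sum_filter_add_sum_filter_not univ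
        (fun π : Equiv.Perm (Fin N) => mcbRnk i π < K)]
      have hz : ∑ π ∈ univ.filter (fun π : Equiv.Perm (Fin N) => ¬ mcbRnk i π < K),
          (margContrib ν i π)^2 = 0 := by
        apply Finset.sum_eq_zero
        intro π hπ
        rw [Finset.mem_filter] at hπ
        rw [mcb_marg_zero ν hloc i π (le_of_not_gt hπ.2)]
        ring
      rw [hz, add_zero]
    set c : ℕ := (univ.filter (fun π : Equiv.Perm (Fin N) => mcbRnk i π < K)).card with hc
    have hcount : ((i:ℕ)+1) * c ≤ K * M := mcb_rank_count K i
    have hcR : (c:ℝ) * m ≤ (K:ℝ) * M := by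
      have : (((i:ℕ)+1) * c : ℕ) ≤ (K * M : ℕ) := hcount
      have h2 : ((((i:ℕ)+1) * c : ℕ) : ℝ) ≤ ((K * M : ℕ) : ℝ) := by exact_mod_cast this
      push_cast at h2
      rw [hm]
      linarith
    have hcle : (c:ℝ) ≤ (K:ℝ)/m * M := by
      rw [div_mul_eq_mul_div, le_div_iff₀ hm0]
      linarith
    have hKm : (K:ℝ)/m ≤ 1 - q i ^ 2 := by
      rw [← h1q]
      nlinarith
    calc ∑ π : Equiv.Perm (Fin N), (margContrib ν i π)^2
        = ∑ π ∈ univ.filter (fun π : Equiv.Perm (Fin N) => mcbRnk i π < K),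
            (margContrib ν i π)^2 := hsplit
      _ ≤ ∑ _π ∈ univ.filter (fun π : Equiv.Perm (Fin N) => mcbRnk i π < K), r^2 :=
          Finset.sum_le_sum (fun π _ => hsq π)
      _ = (c:ℝ) * r^2 := by rw [Finset.sum_const, nsmul_eq_mul, hc]
      _ ≤ ((K:ℝ)/m * M) * r^2 := by
          apply mul_le_mul_of_nonneg_right hcle (by positivity)
      _ ≤ ((1 - q i ^ 2) * M) * r^2 := by
          apply mul_le_mul_of_nonneg_right _ (by positivity)
          apply mul_le_mul_of_nonneg_right hKm (by positivity)
      _ = ((1 - q i ^ 2) * r^2) * M := by ring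

end MCBennettAux2

/-- Bennett-type sample-complexity bound for the Monte Carlo approximation of
the Shapley values of a K-NN-type utility: if `T` satisfies
`∑_{i=1}^N exp(−T(1−q_i²)h(ε/((1−q_i²)r))) ≤ δ/2` with
`h(u) = (1+u)log(1+u) − u`, `q_i = 0` for `i ≤ K` and `q_i = (i−K)/i` otherwise,
then with probability at least `1−δ` over `T` i.i.d. uniform permutations all
`N` Monte Carlo estimates are within `ε` of the true Shapley values.
(Points are indexed by `Fin N`, point `i : Fin N` having 1-based index
`(i:ℕ)+1`, sorted by increasing distance to the test point.) -/
theorem mc_bennett_bound (N K T : ℕ) (hK1 : 1 ≤ K) (hKN : K ≤ N)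
    (ν : Finset (Fin N) → ℝ)
    (hloc : ∀ (S : Finset (Fin N)) (i : Fin N), i ∉ S →
      K ≤ (S.filter (fun j => j < i)).card → ν (insert i S) = ν S)
    (r ε δ : ℝ) (hr : 0 < r) (hε : 0 < ε) (hδ0 : 0 < δ) (hδ1 : δ < 1)
    (hrange : ∀ (i : Fin N) (π : Equiv.Perm (Fin N)), |margContrib ν i π| ≤ r)
    (q : Fin N → ℝ)
    (hq : ∀ i : Fin N,
      q i = if (i : ℕ) + 1 ≤ K then 0
        else (((i : ℕ) + 1 - K : ℕ) : ℝ) / ((i : ℕ) + 1))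
    (hT : ∑ i : Fin N,
        Real.exp (-(T : ℝ) * (1 - q i ^ 2) *
          ((1 + ε / ((1 - q i ^ 2) * r)) * Real.log (1 + ε / ((1 - q i ^ 2) * r)) -
            ε / ((1 - q i ^ 2) * r))) ≤ δ / 2) :
    ((Finset.univ.filter (fun ω : Fin T → Equiv.Perm (Fin N) =>
          ∃ i : Fin N,
            ε ≤ |(1 / (T : ℝ)) * (∑ t, margContrib ν i (ω t)) - shapleyPerm ν i|)).card : ℝ) /
        (Fintype.card (Fin T → Equiv.Perm (Fin N)) : ℝ) ≤ δ := by
  classical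
  have hN1 : 1 ≤ N := le_trans hK1 hKN
  have hT0 : 0 < T := by
    rcases Nat.eq_zero_or_pos T with h | h
    · exfalso
      subst h
      simp only [Nat.cast_zero, neg_zero, zero_mul, Real.exp_zero, Finset.sum_const,
        Finset.card_univ, Fintype.card_fin, nsmul_eq_mul, mul_one] at hT
      have h1 : (1:ℝ) ≤ (N:ℝ) := by exact_mod_cast hN1
      linarith
    · exact h
  have hT0' : (0:ℝ) < (T:ℝ) := by exact_mod_cast hT0
  have hM0 : 0 < Fintype.card (Equiv.Perm (Fin N)) := Fintype.card_pos
  have hM0' : (0:ℝ) < (Fintype.card (Equiv.Perm (Fin N)) : ℝ) := by exact_mod_cast hM0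
  have hMfact : ((Fintype.card (Equiv.Perm (Fin N)) : ℕ) : ℝ) = (Nat.factorial N : ℝ) := by
    rw [Fintype.card_perm, Fintype.card_fin]
  have hshap : ∀ i : Fin N, shapleyPerm ν i
      = (∑ π : Equiv.Perm (Fin N), margContrib ν i π)
        / (Fintype.card (Equiv.Perm (Fin N)) : ℝ) := by
    intro i
    rw [shapleyPerm, hMfact]
    ring
  -- the one-sided events
  set Ep : Fin N → Finset (Fin T → Equiv.Perm (Fin N)) := fun i =>
    Finset.univ.filter (fun ω : Fin T → Equiv.Perm (Fin N) =>
      (T:ℝ) * ((∑ a, margContrib ν i a) / (Fintype.card (Equiv.Perm (Fin N))) + ε)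
        ≤ ∑ t, margContrib ν i (ω t)) with hEp
  set Em : Fin N → Finset (Fin T → Equiv.Perm (Fin N)) := fun i =>
    Finset.univ.filter (fun ω : Fin T → Equiv.Perm (Fin N) =>
      (T:ℝ) * ((∑ a, -margContrib ν i a) / (Fintype.card (Equiv.Perm (Fin N))) + ε)
        ≤ ∑ t, -margContrib ν i (ω t)) with hEm
  have hincl : (Finset.univ.filter (fun ω : Fin T → Equiv.Perm (Fin N) =>
      ∃ i : Fin N,
        ε ≤ |(1 / (T : ℝ)) * (∑ t, margContrib ν i (ω t)) - shapleyPerm ν i|))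
      ⊆ Finset.univ.biUnion (fun i => Ep i ∪ Em i) := by
    intro ω hω
    rw [Finset.mem_filter] at hω
    obtain ⟨i, hi⟩ := hω.2
    refine Finset.mem_biUnion.2 ⟨i, Finset.mem_univ i, ?_⟩
    rw [Finset.mem_union]
    rcases le_abs.1 hi with h | h
    · left
      rw [hEp]
      simp only [Finset.mem_filter, Finset.mem_univ, true_and]
      have hs := hshap i
      calc (T:ℝ) * ((∑ a, margContrib ν i a) / (Fintype.card (Equiv.Perm (Fin N))) + ε)
          = (T:ℝ) * (shapleyPerm ν i + ε) := by rw [hs]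
        _ ≤ (T:ℝ) * ((1 / (T : ℝ)) * (∑ t, margContrib ν i (ω t))) := by
            apply mul_le_mul_of_nonneg_left (by linarith) hT0'.le
        _ = ∑ t, margContrib ν i (ω t) := by
            field_simp
    · right
      rw [hEm]
      simp only [Finset.mem_filter, Finset.mem_univ, true_and]
      have hs := hshap i
      rw [neg_sub] at h
      have hsumneg : ∑ a : Equiv.Perm (Fin N), -margContrib ν i a
          = -∑ a : Equiv.Perm (Fin N), margContrib ν i a := by
        rw [Finset.sum_neg_distrib]
      have hsumnegt : ∑ t, -margContrib ν i (ω t) = -∑ t, margContrib ν i (ω t) := by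
        rw [Finset.sum_neg_distrib]
      rw [hsumneg, hsumnegt]
      calc (T:ℝ) * (-(∑ a, margContrib ν i a) / (Fintype.card (Equiv.Perm (Fin N))) + ε)
          = (T:ℝ) * (-shapleyPerm ν i + ε) := by rw [hs]; ring_nf
        _ ≤ (T:ℝ) * (-((1 / (T : ℝ)) * (∑ t, margContrib ν i (ω t)))) := by
            apply mul_le_mul_of_nonneg_left (by linarith) hT0'.le
        _ = -∑ t, margContrib ν i (ω t) := by
            field_simp
  -- per-index bennett bounds
  have hbound : ∀ i : Fin N,
      ((Ep i).card : ℝ) + ((Em i).card : ℝ)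
        ≤ 2 * ((Fintype.card (Equiv.Perm (Fin N)) : ℝ))^T *
          Real.exp (-(T : ℝ) * (1 - q i ^ 2) *
            ((1 + ε / ((1 - q i ^ 2) * r)) * Real.log (1 + ε / ((1 - q i ^ 2) * r)) -
              ε / ((1 - q i ^ 2) * r))) := by
    intro i
    obtain ⟨hq0, hq1⟩ := mcb_q_bounds hK1 q hq i
    have hqq : 0 < 1 - q i ^ 2 := by nlinarith
    have hv : 0 < (1 - q i ^ 2) * r^2 := by positivity
    have hvr : ((1 - q i ^ 2) * r^2) / r^2 = 1 - q i ^ 2 := by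
      field_simp
    have hur : ε * r / ((1 - q i ^ 2) * r^2) = ε / ((1 - q i ^ 2) * r) := by
      rw [div_eq_div_iff (by positivity) (by positivity)]
      ring
    have hm2 : ∑ a : Equiv.Perm (Fin N), (margContrib ν i a)^2
        ≤ ((1 - q i ^ 2) * r^2) * (Fintype.card (Equiv.Perm (Fin N))) :=
      mcb_second_moment hK1 ν hloc r hr hrange q hq i
    have hm2' : ∑ a : Equiv.Perm (Fin N), (-margContrib ν i a)^2
        ≤ ((1 - q i ^ 2) * r^2) * (Fintype.card (Equiv.Perm (Fin N))) := by
      simpa [neg_pow] using hm2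
    have hp := mcb_bennett_onesided T (fun π => margContrib ν i π) r
      ((1 - q i ^ 2) * r^2) ε hr hv hε hM0 (fun a => hrange i a) hm2
    have hm := mcb_bennett_onesided T (fun π => -margContrib ν i π) r
      ((1 - q i ^ 2) * r^2) ε hr hv hε hM0
      (fun a => by rw [abs_neg]; exact hrange i a) hm2'
    rw [hvr, hur] at hp hm
    rw [hEp, hEm]
    calc ((Finset.univ.filter (fun ω : Fin T → Equiv.Perm (Fin N) =>
          (T:ℝ) * ((∑ a, margContrib ν i a) / (Fintype.card (Equiv.Perm (Fin N))) + ε)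
            ≤ ∑ t, margContrib ν i (ω t))).card : ℝ)
        + ((Finset.univ.filter (fun ω : Fin T → Equiv.Perm (Fin N) =>
          (T:ℝ) * ((∑ a, -margContrib ν i a) / (Fintype.card (Equiv.Perm (Fin N))) + ε)
            ≤ ∑ t, -margContrib ν i (ω t))).card : ℝ)
        ≤ ((Fintype.card (Equiv.Perm (Fin N)) : ℝ))^T *
            Real.exp (-(T : ℝ) * (1 - q i ^ 2) *
              ((1 + ε / ((1 - q i ^ 2) * r)) * Real.log (1 + ε / ((1 - q i ^ 2) * r)) -
                ε / ((1 - q i ^ 2) * r)))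
          + ((Fintype.card (Equiv.Perm (Fin N)) : ℝ))^T *
            Real.exp (-(T : ℝ) * (1 - q i ^ 2) *
              ((1 + ε / ((1 - q i ^ 2) * r)) * Real.log (1 + ε / ((1 - q i ^ 2) * r)) -
                ε / ((1 - q i ^ 2) * r))) := add_le_add hp hm
      _ = 2 * ((Fintype.card (Equiv.Perm (Fin N)) : ℝ))^T *
            Real.exp (-(T : ℝ) * (1 - q i ^ 2) *
              ((1 + ε / ((1 - q i ^ 2) * r)) * Real.log (1 + ε / ((1 - q i ^ 2) * r)) -
                ε / ((1 - q i ^ 2) * r))) := by ring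
  -- counting chain
  have hcount : ((Finset.univ.filter (fun ω : Fin T → Equiv.Perm (Fin N) =>
      ∃ i : Fin N,
        ε ≤ |(1 / (T : ℝ)) * (∑ t, margContrib ν i (ω t)) - shapleyPerm ν i|)).card : ℝ)
      ≤ δ * ((Fintype.card (Equiv.Perm (Fin N)) : ℝ))^T := by
    have h1 : (Finset.univ.filter (fun ω : Fin T → Equiv.Perm (Fin N) =>
        ∃ i : Fin N,
          ε ≤ |(1 / (T : ℝ)) * (∑ t, margContrib ν i (ω t)) - shapleyPerm ν i|)).card
        ≤ ∑ i : Fin N, ((Ep i).card + (Em i).card) := by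
      calc _ ≤ (Finset.univ.biUnion (fun i => Ep i ∪ Em i)).card :=
            Finset.card_le_card hincl
        _ ≤ ∑ i : Fin N, (Ep i ∪ Em i).card := Finset.card_biUnion_le
        _ ≤ ∑ i : Fin N, ((Ep i).card + (Em i).card) :=
            Finset.sum_le_sum (fun i _ => Finset.card_union_le _ _)
    have h1' : ((Finset.univ.filter (fun ω : Fin T → Equiv.Perm (Fin N) =>
        ∃ i : Fin N,
          ε ≤ |(1 / (T : ℝ)) * (∑ t, margContrib ν i (ω t)) - shapleyPerm ν i|)).card : ℝ)
        ≤ ∑ i : Fin N, (((Ep i).card : ℝ) + ((Em i).card : ℝ)) := by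
      exact_mod_cast h1
    calc _ ≤ ∑ i : Fin N, (((Ep i).card : ℝ) + ((Em i).card : ℝ)) := h1'
      _ ≤ ∑ i : Fin N, 2 * ((Fintype.card (Equiv.Perm (Fin N)) : ℝ))^T *
            Real.exp (-(T : ℝ) * (1 - q i ^ 2) *
              ((1 + ε / ((1 - q i ^ 2) * r)) * Real.log (1 + ε / ((1 - q i ^ 2) * r)) -
                ε / ((1 - q i ^ 2) * r))) := Finset.sum_le_sum (fun i _ => hbound i)
      _ = 2 * ((Fintype.card (Equiv.Perm (Fin N)) : ℝ))^T *
            ∑ i : Fin N, Real.exp (-(T : ℝ) * (1 - q i ^ 2) *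
              ((1 + ε / ((1 - q i ^ 2) * r)) * Real.log (1 + ε / ((1 - q i ^ 2) * r)) -
                ε / ((1 - q i ^ 2) * r))) := by
          rw [Finset.mul_sum]
      _ ≤ 2 * ((Fintype.card (Equiv.Perm (Fin N)) : ℝ))^T * (δ / 2) := by
          apply mul_le_mul_of_nonneg_left hT (by positivity)
      _ = δ * ((Fintype.card (Equiv.Perm (Fin N)) : ℝ))^T := by ring
  have hΩ : (Fintype.card (Fin T → Equiv.Perm (Fin N)) : ℝ)
      = ((Fintype.card (Equiv.Perm (Fin N)) : ℝ))^T := by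
    rw [Fintype.card_fun, Fintype.card_fin]
    push_cast
    ring
  rw [hΩ, div_le_iff₀ (by positivity)]
  exact hcount
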